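/- In ℝ², the convex complete set Γ generated by the points (3,0), (1,1), (0,2) (the convex hull of the union of the sets p + ℝ₊² for p ∈ {(3,0),(1,1),(0,2)}) decomposes as the Minkowski sum Γ = Γ₁ + Γ₂, where Γ₁ is generated by (1,0) and (0,1), and Γ₂ is generated by (2,0) and (0,1); moreover, neither Γ₁ nor Γ₂ is homothetic to Γ. -/

import Mathlib

open Pointwise

def orthant (n : ℕ) : Set (Fin n → ℝ) := {x | ∀ i, 0 ≤ x i}

/-- the complete convex set generated by a finite set of points of the orthant -/
def gen {n : ℕ} (S : Set (Fin n → ℝ)) : Set (Fin n → ℝ) :=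
  convexHull ℝ (⋃ p ∈ S, {p} + orthant n)

def Homothetic {n : ℕ} (K B : Set (Fin n → ℝ)) : Prop :=
  (∃ c : ℝ, 0 < c ∧ ∃ x ∈ orthant n, K = c • B + {x}) ∨
    (∃ x ∈ orthant n, K = {x} + orthant n)

/-- the complete convex set generated by `(3,0), (1,1), (0,2)` decomposes as
the Minkowski sum of the sets generated by `(1,0),(0,1)` and by `(2,0),(0,1)`,
neither summand being homothetic to it. -/
lemma mem_single_add (p x : Fin 2 → ℝ) :
    x ∈ ({p} : Set (Fin 2 → ℝ)) + orthant 2 ↔ ∀ i, p i ≤ x i := by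
  constructor
  · rintro ⟨u, hu, v, hv, rfl⟩
    simp only [Set.mem_singleton_iff] at hu
    subst hu
    intro i
    have := hv i
    simp only [Pi.add_apply]
    linarith
  · intro h
    exact ⟨p, Set.mem_singleton _, x - p, fun i => by simpa using h i, by ring⟩

def H1 : Set (Fin 2 → ℝ) := {x | 0 ≤ x 0 ∧ 0 ≤ x 1 ∧ 1 ≤ x 0 + x 1}
def H2 : Set (Fin 2 → ℝ) := {x | 0 ≤ x 0 ∧ 0 ≤ x 1 ∧ 2 ≤ x 0 + 2 * x 1}
def HH : Set (Fin 2 → ℝ) := {x | 0 ≤ x 0 ∧ 0 ≤ x 1 ∧ 3 ≤ x 0 + 2 * x 1 ∧ 2 ≤ x 0 + x 1}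

lemma convex_H1 : Convex ℝ H1 := by
  intro p hp q hq a b ha hb hab
  obtain ⟨h1, h2, h3⟩ := hp
  obtain ⟨k1, k2, k3⟩ := hq
  refine ⟨?_, ?_, ?_⟩ <;> simp only [Pi.add_apply, Pi.smul_apply, smul_eq_mul] <;>
    nlinarith [mul_nonneg ha h1, mul_nonneg hb k1, mul_nonneg ha h2, mul_nonneg hb k2,
      mul_le_mul_of_nonneg_left h3 ha, mul_le_mul_of_nonneg_left k3 hb]

lemma convex_H2 : Convex ℝ H2 := by
  intro p hp q hq a b ha hb hab
  obtain ⟨h1, h2, h3⟩ := hp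
  obtain ⟨k1, k2, k3⟩ := hq
  refine ⟨?_, ?_, ?_⟩ <;> simp only [Pi.add_apply, Pi.smul_apply, smul_eq_mul] <;>
    nlinarith [mul_nonneg ha h1, mul_nonneg hb k1, mul_nonneg ha h2, mul_nonneg hb k2,
      mul_le_mul_of_nonneg_left h3 ha, mul_le_mul_of_nonneg_left k3 hb]

lemma convex_HH : Convex ℝ HH := by
  intro p hp q hq a b ha hb hab
  obtain ⟨h1, h2, h3, h4⟩ := hp
  obtain ⟨k1, k2, k3, k4⟩ := hq
  refine ⟨?_, ?_, ?_, ?_⟩ <;> simp only [Pi.add_apply, Pi.smul_apply, smul_eq_mul] <;>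
    nlinarith [mul_nonneg ha h1, mul_nonneg hb k1, mul_nonneg ha h2, mul_nonneg hb k2,
      mul_le_mul_of_nonneg_left h3 ha, mul_le_mul_of_nonneg_left k3 hb,
      mul_le_mul_of_nonneg_left h4 ha, mul_le_mul_of_nonneg_left k4 hb]

lemma mem_gen_union {S : Set (Fin 2 → ℝ)} {p x : Fin 2 → ℝ} (hp : p ∈ S)
    (h : ∀ i, p i ≤ x i) : x ∈ gen S := by
  apply subset_convexHull
  exact Set.mem_biUnion hp ((mem_single_add p x).2 h)

lemma genH1 : gen {![(1:ℝ),0], ![0,1]} = H1 := by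
  apply le_antisymm
  · apply convexHull_min _ convex_H1
    intro y hy
    simp only [Set.mem_iUnion, exists_prop, Set.mem_insert_iff, Set.mem_singleton_iff] at hy
    obtain ⟨p, hp | hp, hmem⟩ := hy <;> subst hp <;>
      rw [mem_single_add] at hmem <;>
      · have h0 := hmem 0
        have h1 := hmem 1
        simp at h0 h1
        exact ⟨by linarith, by linarith, by linarith⟩
  · intro x hx
    obtain ⟨h0, h1, hs⟩ := hx
    set s := x 0 + x 1 with hsdef
    have hspos : 0 < s := by linarith
    have hP : (![s, 0] : Fin 2 → ℝ) ∈ gen {![(1:ℝ),0], ![0,1]} :=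
      mem_gen_union (p := ![1,0]) (by simp) (fun i => by fin_cases i <;> simp <;> linarith)
    have hQ : (![0, s] : Fin 2 → ℝ) ∈ gen {![(1:ℝ),0], ![0,1]} :=
      mem_gen_union (p := ![0,1]) (by simp) (fun i => by fin_cases i <;> simp <;> linarith)
    have hcomb := (convex_convexHull ℝ _) hP hQ (div_nonneg h0 hspos.le)
      (div_nonneg h1 hspos.le) (by field_simp; try rfl)
    convert hcomb using 1
    · rfl
    funext i
    fin_cases i <;> simp [Pi.add_apply] <;> field_simp

lemma genH2 : gen {![(2:ℝ),0], ![0,1]} = H2 := by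
  apply le_antisymm
  · apply convexHull_min _ convex_H2
    intro y hy
    simp only [Set.mem_iUnion, exists_prop, Set.mem_insert_iff, Set.mem_singleton_iff] at hy
    obtain ⟨p, hp | hp, hmem⟩ := hy <;> subst hp <;>
      rw [mem_single_add] at hmem <;>
      · have h0 := hmem 0
        have h1 := hmem 1
        simp at h0 h1
        exact ⟨by linarith, by linarith, by linarith⟩
  · intro x hx
    obtain ⟨h0, h1, hs⟩ := hx
    set s := x 0 + 2 * x 1 with hsdef
    have hspos : 0 < s := by linarith
    have hP : (![s, 0] : Fin 2 → ℝ) ∈ gen {![(2:ℝ),0], ![0,1]} :=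
      mem_gen_union (p := ![2,0]) (by simp) (fun i => by fin_cases i <;> simp <;> linarith)
    have hQ : (![0, s/2] : Fin 2 → ℝ) ∈ gen {![(2:ℝ),0], ![0,1]} :=
      mem_gen_union (p := ![0,1]) (by simp) (fun i => by fin_cases i <;> simp <;> linarith)
    have hcomb := (convex_convexHull ℝ _) hP hQ (div_nonneg h0 hspos.le)
      (div_nonneg (by linarith : (0:ℝ) ≤ 2 * x 1) hspos.le) (by field_simp; try rfl)
    convert hcomb using 1
    · rfl
    funext i
    fin_cases i <;> simp [Pi.add_apply] <;> field_simp <;> try ring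

lemma genHH : gen {![(3:ℝ),0], ![1,1], ![0,2]} = HH := by
  apply le_antisymm
  · apply convexHull_min _ convex_HH
    intro y hy
    simp only [Set.mem_iUnion, exists_prop, Set.mem_insert_iff, Set.mem_singleton_iff] at hy
    obtain ⟨p, hp | hp | hp, hmem⟩ := hy <;> subst hp <;>
      rw [mem_single_add] at hmem <;>
      · have h0 := hmem 0
        have h1 := hmem 1
        simp at h0 h1
        exact ⟨by linarith, by linarith, by linarith, by linarith⟩
  · intro x hx
    obtain ⟨h0, h1, ha, hb⟩ := hx
    rcases le_total (x 1) 1 with hc | hc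
    · -- x = (1 - x1) • ![a, 0] + x1 • ![a-2, 1]
      have hP : (![x 0 + 2 * x 1, 0] : Fin 2 → ℝ) ∈ gen {![(3:ℝ),0], ![1,1], ![0,2]} :=
        mem_gen_union (p := ![3,0]) (by simp) (fun i => by fin_cases i <;> simp <;> linarith)
      have hQ : (![x 0 + 2 * x 1 - 2, 1] : Fin 2 → ℝ) ∈ gen {![(3:ℝ),0], ![1,1], ![0,2]} :=
        mem_gen_union (p := ![1,1]) (by simp) (fun i => by fin_cases i <;> simp <;> linarith)
      have hcomb := (convex_convexHull ℝ _) hP hQ (by linarith : (0:ℝ) ≤ 1 - x 1) h1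
        (by ring)
      convert hcomb using 1
      · rfl
      funext i
      fin_cases i <;> simp [Pi.add_apply] <;> ring
    · rcases le_total (x 1) 2 with hd | hd
      · -- x = (2 - x1) • ![b-1, 1] + (x1 - 1) • ![b-2, 2]
        have hP : (![x 0 + x 1 - 1, 1] : Fin 2 → ℝ) ∈ gen {![(3:ℝ),0], ![1,1], ![0,2]} :=
          mem_gen_union (p := ![1,1]) (by simp) (fun i => by fin_cases i <;> simp <;> linarith)
        have hQ : (![x 0 + x 1 - 2, 2] : Fin 2 → ℝ) ∈ gen {![(3:ℝ),0], ![1,1], ![0,2]} :=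
          mem_gen_union (p := ![0,2]) (by simp) (fun i => by fin_cases i <;> simp <;> linarith)
        have hcomb := (convex_convexHull ℝ _) hP hQ (by linarith : (0:ℝ) ≤ 2 - x 1)
          (by linarith : (0:ℝ) ≤ x 1 - 1) (by ring)
        convert hcomb using 1
        · rfl
        funext i
        fin_cases i <;> simp [Pi.add_apply] <;> ring
      · exact mem_gen_union (p := ![0,2]) (by simp)
          (fun i => by fin_cases i <;> simp <;> linarith)

lemma sum_eq : HH = H1 + H2 := by
  apply le_antisymm
  · intro x hx
    obtain ⟨h0, h1, ha, hb⟩ := hx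
    rcases le_total (x 1) 1 with hc | hc
    · refine ⟨![x 0 + 2 * x 1 - 2, 0], ⟨by simp <;> linarith, by simp, by simp <;> linarith⟩,
        ![2 - 2 * x 1, x 1], ⟨by simp <;> linarith, by simpa using h1, by simp <;> linarith⟩, ?_⟩
      funext i
      fin_cases i <;> simp [Pi.add_apply] <;> ring
    · refine ⟨![x 0, x 1 - 1], ⟨by simpa using h0, by simp <;> linarith, by simp <;> linarith⟩,
        ![0, 1], ⟨by simp, by simp, by simp <;> linarith⟩, ?_⟩
      funext i
      fin_cases i <;> simp [Pi.add_apply] <;> ring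
  · rintro x ⟨u, ⟨hu0, hu1, hu⟩, v, ⟨hv0, hv1, hv⟩, rfl⟩
    refine ⟨by simp [Pi.add_apply]; linarith, by simp [Pi.add_apply]; linarith,
      by simp [Pi.add_apply]; linarith, by simp [Pi.add_apply]; linarith⟩

lemma mem_smul_add_singleton {B : Set (Fin 2 → ℝ)} {c : ℝ} {x y : Fin 2 → ℝ} :
    y ∈ c • B + {x} ↔ ∃ w ∈ B, c • w + x = y := by
  constructor
  · rintro ⟨z, ⟨w, hw, rfl⟩, t, ht, rfl⟩
    simp only [Set.mem_singleton_iff] at ht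
    subst ht
    exact ⟨w, hw, rfl⟩
  · rintro ⟨w, hw, rfl⟩
    exact ⟨c • w, ⟨w, hw, rfl⟩, x, rfl, rfl⟩

lemma not_hom1 : ¬ Homothetic H1 HH := by
  rintro (⟨c, hc, x, hx, hK⟩ | ⟨x, hx, hK⟩)
  · have m1 : (![1, 0] : Fin 2 → ℝ) ∈ H1 := ⟨by norm_num, by norm_num, by norm_num⟩
    rw [hK, mem_smul_add_singleton] at m1
    obtain ⟨w, ⟨hw0, hw1, hwa, hwb⟩, heq⟩ := m1
    have e0 := congrFun heq 0
    have e1 := congrFun heq 1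
    simp [Pi.add_apply, Pi.smul_apply, smul_eq_mul] at e0 e1
    have m2 : c • (![1, 1] : Fin 2 → ℝ) + x ∈ H1 := by
      rw [hK]
      exact mem_smul_add_singleton.2 ⟨![1,1], ⟨by norm_num, by norm_num, by norm_num, by norm_num⟩, rfl⟩
    obtain ⟨_, _, hm2⟩ := m2
    simp [Pi.add_apply, Pi.smul_apply, smul_eq_mul] at hm2
    have hx0 := hx 0
    have hx1 := hx 1
    nlinarith [mul_nonneg hc.le hw1, mul_le_mul_of_nonneg_left hwa hc.le, mul_nonneg hc.le hw0]
  · have m1 : (![1, 0] : Fin 2 → ℝ) ∈ H1 := ⟨by norm_num, by norm_num, by norm_num⟩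
    have m2 : (![0, 1] : Fin 2 → ℝ) ∈ H1 := ⟨by norm_num, by norm_num, by norm_num⟩
    rw [hK, mem_single_add] at m1 m2
    have h1 := m1 1
    have h0 := m2 0
    simp at h0 h1
    have mx : x ∈ H1 := by
      rw [hK, mem_single_add]
      exact fun i => le_refl _
    obtain ⟨_, _, hs⟩ := mx
    have := hx 0
    have := hx 1
    linarith

lemma not_hom2 : ¬ Homothetic H2 HH := by
  rintro (⟨c, hc, x, hx, hK⟩ | ⟨x, hx, hK⟩)
  · have m1 : (![2, 0] : Fin 2 → ℝ) ∈ H2 := ⟨by norm_num, by norm_num, by norm_num⟩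
    rw [hK, mem_smul_add_singleton] at m1
    obtain ⟨w, ⟨hw0, hw1, hwa, hwb⟩, heq⟩ := m1
    have e0 := congrFun heq 0
    have e1 := congrFun heq 1
    simp [Pi.add_apply, Pi.smul_apply, smul_eq_mul] at e0 e1
    -- from e1 : c * w 1 + x 1 = 0, get x 1 = 0, c * w 1 = 0
    have m3 : (![0, 1] : Fin 2 → ℝ) ∈ H2 := ⟨by norm_num, by norm_num, by norm_num⟩
    rw [hK, mem_smul_add_singleton] at m3
    obtain ⟨v, ⟨hv0, hv1, hva, hvb⟩, heq3⟩ := m3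
    have f0 := congrFun heq3 0
    have f1 := congrFun heq3 1
    simp [Pi.add_apply, Pi.smul_apply, smul_eq_mul] at f0 f1
    have m2 : c • (![1, 1] : Fin 2 → ℝ) + x ∈ H2 := by
      rw [hK]
      exact mem_smul_add_singleton.2 ⟨![1,1], ⟨by norm_num, by norm_num, by norm_num, by norm_num⟩, rfl⟩
    obtain ⟨_, _, hm2⟩ := m2
    simp [Pi.add_apply, Pi.smul_apply, smul_eq_mul] at hm2
    have hx0 := hx 0
    have hx1 := hx 1
    -- x1 = 0 from e1; x0 = 0 and c*v0 = 0 from f0; v1 ≥ 2 from hvb; so 1 = c*v1 + x1 ≥ 2c;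
    -- hm2 : 2 ≤ (c + x0) + 2*(c + x1) = 3c : contradiction with c ≤ 1/2
    nlinarith [mul_nonneg hc.le hw1, mul_nonneg hc.le hv0, mul_nonneg hc.le hv1,
      mul_le_mul_of_nonneg_left hvb hc.le]
  · have m1 : (![2, 0] : Fin 2 → ℝ) ∈ H2 := ⟨by norm_num, by norm_num, by norm_num⟩
    have m2 : (![0, 1] : Fin 2 → ℝ) ∈ H2 := ⟨by norm_num, by norm_num, by norm_num⟩
    rw [hK, mem_single_add] at m1 m2
    have h1 := m1 1
    have h0 := m2 0
    simp at h0 h1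
    have mx : x ∈ H2 := by
      rw [hK, mem_single_add]
      exact fun i => le_refl _
    obtain ⟨_, _, hs⟩ := mx
    have := hx 0
    have := hx 1
    linarith

theorem example_decomposition :
    gen {![(3:ℝ),0], ![1,1], ![0,2]} = gen {![(1:ℝ),0], ![0,1]} + gen {![(2:ℝ),0], ![0,1]} ∧
    ¬ Homothetic (gen {![(1:ℝ),0], ![0,1]}) (gen {![(3:ℝ),0], ![1,1], ![0,2]}) ∧
    ¬ Homothetic (gen {![(2:ℝ),0], ![0,1]}) (gen {![(3:ℝ),0], ![1,1], ![0,2]}) := by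
  refine ⟨by rw [genHH, genH1, genH2, sum_eq], ?_, ?_⟩
  · rw [genH1, genHH]
    exact not_hom1
  · rw [genH2, genHH]
    exact not_hom2
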